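/- arXiv:0906.4332 — 2 statements merged into one kernel-verified Lean document; each statement's English description precedes it below -/
import Mathlib

section
/- If Upd is a family of update functions satisfying P1 and P2, and Upd(Pr,B) is a singleton {Pr'}, then Pr' equals the conditional measure Pr(·|B). (Van Fraassen's theorem in this framework.) -/
open MeasureTheory ProbabilityTheory Set
open scoped Classical NNReal ENNReal

noncomputable section

/-- A family of update functions, one for each measure space. -/
abbrev UpdFamily : Type 1 :=
  ∀ (W : Type) [MeasurableSpace W],
    Set (ProbabilityMeasure W) → Set W → Set (ProbabilityMeasure W)

/-- Base condition: `Upd(X,B) = ∅` whenever every measure in `X` gives `B` probability 0. -/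
def UpdBase (U : UpdFamily) : Prop :=
  ∀ (W : Type) [MeasurableSpace W] (X : Set (ProbabilityMeasure W)) (B : Set W),
    (∀ μ ∈ X, μ B = 0) → U W X B = ∅

/-- The conditional probability `Pr(A|B) = Pr(A ∩ B)/Pr(B)`. -/
def condProb {W : Type} [MeasurableSpace W] (μ : ProbabilityMeasure W) (A B : Set W) : ℝ≥0 :=
  μ (A ∩ B) / μ B

/-- The conditional probability measure `Pr(·|B)` (defined when `Pr(B) > 0`). -/
def condPM {W : Type} [MeasurableSpace W] (μ : ProbabilityMeasure W) (B : Set W) :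
    ProbabilityMeasure W :=
  if h : (μ : Measure W) B ≠ 0 then
    ⟨(μ : Measure W)[|B], cond_isProbabilityMeasure h⟩
  else μ

/-- Pushforward of a probability measure along a measurable map (`f*`). -/
def pushPM {W W' : Type} [MeasurableSpace W] [MeasurableSpace W']
    {f : W → W'} (hf : Measurable f) (μ : ProbabilityMeasure W) : ProbabilityMeasure W' :=
  μ.map hf.aemeasurable

/-- P1: every measure in `Upd(X,B)` assigns probability 1 to `B`. -/
def P1 (U : UpdFamily) : Prop :=
  ∀ (W : Type) [MeasurableSpace W] (X : Set (ProbabilityMeasure W)) (B : Set W),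
    MeasurableSet B → ∀ μ ∈ U W X B, μ B = 1

/-- P2: representation independence under measurable surjections. -/
def P2 (U : UpdFamily) : Prop :=
  ∀ (W W' : Type) [MeasurableSpace W] [MeasurableSpace W'] (f : W → W')
    (hf : Measurable f), Function.Surjective f →
    ∀ (X : Set (ProbabilityMeasure W)) (B : Set W'), MeasurableSet B →
      U W' (pushPM hf '' X) B = pushPM hf '' (U W X (f ⁻¹' B))

/-- P3: compositionality of updating. -/
def P3 (U : UpdFamily) : Prop :=
  ∀ (W : Type) [MeasurableSpace W] (X : Set (ProbabilityMeasure W)) (B C : Set W),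
    MeasurableSet B → MeasurableSet C → U W (U W X B) C = U W X (B ∩ C)

/-- P4: trivial update on sure evidence. -/
def P4 (U : UpdFamily) : Prop :=
  ∀ (W : Type) [MeasurableSpace W] (X : Set (ProbabilityMeasure W)) (B : Set W),
    MeasurableSet B → (∀ μ ∈ X, μ B = 1) → U W X B = X

/-- P5: pointwise union decomposition. -/
def P5 (U : UpdFamily) : Prop :=
  ∀ (W : Type) [MeasurableSpace W] (X : Set (ProbabilityMeasure W)) (B : Set W),
    MeasurableSet B → U W X B = ⋃ μ ∈ X, U W {μ} B

/-- P6': singleton inputs yield at most one output measure. -/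
def P6' (U : UpdFamily) : Prop :=
  ∀ (W : Type) [MeasurableSpace W] (μ : ProbabilityMeasure W) (B : Set W),
    MeasurableSet B → (U W {μ} B).Subsingleton

/-- P6'': bounded amplification relative to conditioning. -/
def P6'' (U : UpdFamily) : Prop :=
  ∀ (W : Type) [MeasurableSpace W] (μ : ProbabilityMeasure W), ∃ c : ℝ≥0,
    ∀ (A B : Set W), MeasurableSet A → MeasurableSet B →
      ∀ ν ∈ U W {μ} B, ν A ≤ c * condProb μ A B

/-- P6: either P6' or P6'' holds. -/
def P6 (U : UpdFamily) : Prop := P6' U ∨ P6'' U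

/-- P7: some non-sure evidence yields a nonempty update. -/
def P7 (U : UpdFamily) : Prop :=
  ∃ (W : Type) (_ : MeasurableSpace W) (X : Set (ProbabilityMeasure W)) (B : Set W),
    MeasurableSet B ∧ (∀ μ ∈ X, μ B ≠ 1) ∧ U W X B ≠ ∅

/-- Conditioning: `Upd_cond(X,B) = {Pr(·|B) : Pr ∈ X, Pr(B) > 0}`. -/
def updCond {W : Type} [MeasurableSpace W] (X : Set (ProbabilityMeasure W)) (B : Set W) :
    Set (ProbabilityMeasure W) :=
  {ν | ∃ μ ∈ X, 0 < μ B ∧ ν = condPM μ B}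

/-- Constraining: `Upd_constrain(X,B) = {Pr ∈ X : Pr(B) = 1}`. -/
def updConstrain {W : Type} [MeasurableSpace W] (X : Set (ProbabilityMeasure W)) (B : Set W) :
    Set (ProbabilityMeasure W) := {μ ∈ X | μ B = 1}

end

section Helpers
open Filter

/-- Darboux: inside a measurable set of finite volume we can find a subset of any
smaller prescribed volume. -/
lemma darboux (E : Set ℝ) (hE : MeasurableSet E) (hfin : volume E ≠ ⊤) (r : ℝ) (hr : 0 ≤ r)
    (hrE : ENNReal.ofReal r ≤ volume E) :
    ∃ U, U ⊆ E ∧ MeasurableSet U ∧ volume U = ENNReal.ofReal r := by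
  set f : ℝ → ℝ := fun t => (volume (E ∩ Iio t)).toReal with hf
  have hfinsub : ∀ t, volume (E ∩ Iio t) ≠ ⊤ :=
    fun t => ne_top_of_le_ne_top hfin (measure_mono inter_subset_left)
  have hlip : LipschitzWith 1 f := by
    apply LipschitzWith.of_dist_le_mul
    intro s t
    wlog h : t ≤ s generalizing s t
    · rw [dist_comm, dist_comm s t]; exact this t s (le_of_not_ge h)
    have hsub : E ∩ Iio s ⊆ (E ∩ Iio t) ∪ (Ico t s) := by
      rintro x ⟨hxE, hxs⟩
      by_cases hx : x < t
      · exact Or.inl ⟨hxE, hx⟩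
      · exact Or.inr ⟨le_of_not_gt hx, hxs⟩
    have h1 : volume (E ∩ Iio s) ≤ volume (E ∩ Iio t) + ENNReal.ofReal (s - t) := by
      calc volume (E ∩ Iio s) ≤ volume ((E ∩ Iio t) ∪ Ico t s) := measure_mono hsub
        _ ≤ volume (E ∩ Iio t) + volume (Ico t s) := measure_union_le _ _
        _ = volume (E ∩ Iio t) + ENNReal.ofReal (s - t) := by rw [Real.volume_Ico]
    have h2 : volume (E ∩ Iio t) ≤ volume (E ∩ Iio s) :=
      measure_mono (inter_subset_inter_right _ (Iio_subset_Iio h))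
    have hft : f t ≤ f s := ENNReal.toReal_mono (hfinsub s) h2
    have hfs : f s ≤ f t + (s - t) := by
      have := ENNReal.toReal_mono (by
          exact ENNReal.add_ne_top.2 ⟨hfinsub t, ENNReal.ofReal_ne_top⟩) h1
      rwa [ENNReal.toReal_add (hfinsub t) ENNReal.ofReal_ne_top,
        ENNReal.toReal_ofReal (by linarith [abs_nonneg (s-t)] : (0:ℝ) ≤ s - t)] at this
    have habs : |s - t| = s - t := abs_of_nonneg (by linarith)
    rw [Real.dist_eq, Real.dist_eq, habs, abs_le, NNReal.coe_one, one_mul]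
    constructor <;> linarith
  have hmono : Monotone f := fun s t hst =>
    ENNReal.toReal_mono (hfinsub t)
      (measure_mono (inter_subset_inter_right _ (Iio_subset_Iio hst)))
  rcases eq_or_lt_of_le hrE with heq | hlt
  · exact ⟨E, subset_rfl, hE, heq.symm⟩
  by_cases hr0 : r = 0
  · exact ⟨∅, empty_subset _, MeasurableSet.empty, by simp [hr0]⟩
  have hr0' : 0 < r := lt_of_le_of_ne hr (Ne.symm hr0)
  -- find b with r ≤ f b
  have hUnion : Tendsto (fun t : ℝ => volume (E ∩ Iio t)) atTop (nhds (volume E)) := by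
    have h1 : (⋃ t : ℝ, E ∩ Iio t) = E := by
      ext x; simp only [mem_iUnion, mem_inter_iff, mem_Iio]
      exact ⟨fun ⟨t, ht⟩ => ht.1, fun hx => ⟨x + 1, hx, by linarith⟩⟩
    have := tendsto_measure_iUnion_atTop (μ := volume)
      (s := fun t : ℝ => E ∩ Iio t)
      (fun s t hst => inter_subset_inter_right _ (Iio_subset_Iio hst))
    rwa [h1] at this
  have hb : ∃ b : ℝ, ENNReal.ofReal r ≤ volume (E ∩ Iio b) := by
    have := hUnion.eventually_const_le (by exact hlt)
    rcases this.exists with ⟨b, hb⟩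
    exact ⟨b, hb⟩
  rcases hb with ⟨b, hbge⟩
  -- find a with f a ≤ r
  have hInter : Tendsto (fun t : ℝ => volume (E ∩ Iio t)) atBot (nhds 0) := by
    have h1 : (⋂ t : ℝ, E ∩ Iio t) = ∅ := by
      ext x; simp only [mem_iInter, mem_inter_iff, mem_Iio, mem_empty_iff_false, iff_false]
      intro h; exact absurd ((h x).2) (lt_irrefl x)
    have := tendsto_measure_iInter_atBot (μ := volume)
      (s := fun t : ℝ => E ∩ Iio t)
      (fun t => ((hE.inter measurableSet_Iio).nullMeasurableSet))
      (fun s t hst => inter_subset_inter_right _ (Iio_subset_Iio hst))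
      ⟨0, hfinsub 0⟩
    rwa [h1, measure_empty] at this
  have ha : ∃ a : ℝ, volume (E ∩ Iio a) < ENNReal.ofReal r := by
    have := hInter.eventually_lt_const (by simp [hr0'] : (0:ℝ≥0∞) < ENNReal.ofReal r)
    exact this.exists
  rcases ha with ⟨a, halt⟩
  -- IVT
  have hab : min a b ≤ max a b := le_trans (min_le_left _ _) (le_max_left _ _)
  have hfa : f (min a b) ≤ r := by
    have h1 : f (min a b) ≤ f a := hmono (min_le_left _ _)
    have h2 : f a ≤ r := by
      have := ENNReal.toReal_mono ENNReal.ofReal_ne_top halt.le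
      rwa [ENNReal.toReal_ofReal hr] at this
    linarith
  have hfb : r ≤ f (max a b) := by
    have h1 : f b ≤ f (max a b) := hmono (le_max_right _ _)
    have h2 : r ≤ f b := by
      have := ENNReal.toReal_mono (hfinsub b) hbge
      rwa [ENNReal.toReal_ofReal hr] at this
    linarith
  have hIVT := intermediate_value_Icc hab (hlip.continuous.continuousOn) ⟨hfa, hfb⟩
  rcases hIVT with ⟨t, _, hft⟩
  refine ⟨E ∩ Iio t, inter_subset_left, hE.inter measurableSet_Iio, ?_⟩
  have : ENNReal.ofReal (f t) = volume (E ∩ Iio t) := ENNReal.ofReal_toReal (hfinsub t)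
  rw [← this, hft]

lemma cancel_add_right {a b u : ℝ≥0∞} (hu : u ≠ ⊤) (h : a + u = b + u) : a = b := by
  have := congrArg (fun z => z - u) h
  simpa [ENNReal.add_sub_cancel_right hu] using this

/-- Key squeeze lemma: if a finite measure `κ` on `ℝ` with `κ (Ico 0 y) = 1` assigns the
same value `c` to every measurable subset of `Ico 0 y` of volume `x`, then `c = x/y`. -/
lemma key (yR xR : ℝ) (hx0 : 0 < xR) (hxy : xR < yR)
    (κ : Measure ℝ) [IsFiniteMeasure κ] (hκy : κ (Set.Ico 0 yR) = 1) (c : ℝ≥0∞)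
    (H : ∀ S, MeasurableSet S → S ⊆ Set.Ico 0 yR → volume S = ENNReal.ofReal xR → κ S = c) :
    c = ENNReal.ofReal (xR / yR) := by
  have hy : 0 < yR := lt_trans hx0 hxy
  have hcne : c ≠ ⊤ := by
    have : κ (Ico 0 xR) = c := by
      apply H _ measurableSet_Ico (Ico_subset_Ico le_rfl hxy.le)
      simp [Real.volume_Ico, sub_zero]
    rw [← this]; exact measure_ne_top κ _
  -- main quantitative step for each big enough N
  have main : ∀ N : ℕ, yR / N ≤ xR → yR / N ≤ yR - xR → 0 < N →
      |c.toReal - xR / yR| ≤ 1 / N := by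
    intro N hNx hNy hN0
    set h : ℝ := yR / N with hdefh
    have hh0 : 0 < h := div_pos hy (by exact_mod_cast hN0)
    have hhx : h ≤ xR := hNx
    have hhyx : h ≤ yR - xR := hNy
    -- Step A : all length-h subintervals of [0,y) have the same κ-measure
    have stepA : ∀ a : ℝ, 0 ≤ a → a + h ≤ yR → κ (Ico a (a + h)) = κ (Ico 0 h) := by
      have main2 : ∀ a b : ℝ, 0 ≤ a → a + h ≤ yR → 0 ≤ b → b + h ≤ yR →
          κ (Ico a (a + h)) = κ (Ico b (b + h)) := by
        intro a b ha0 hay hb0 hby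
        set Iab : Set ℝ := Ico a (a + h) ∪ Ico b (b + h) with hIab
        set E : Set ℝ := Ico 0 yR \ Iab with hEdef
        have hImeas : MeasurableSet Iab := (measurableSet_Ico).union measurableSet_Ico
        have hEmeas : MeasurableSet E := measurableSet_Ico.diff hImeas
        have hEfin : volume E ≠ ⊤ :=
          ne_top_of_le_ne_top (by simp [Real.volume_Ico]) (measure_mono diff_subset)
        have hIvol : volume Iab ≤ ENNReal.ofReal (2 * h) := by
          calc volume Iab ≤ volume (Ico a (a+h)) + volume (Ico b (b+h)) := measure_union_le _ _
            _ = ENNReal.ofReal h + ENNReal.ofReal h := by simp [Real.volume_Ico]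
            _ = ENNReal.ofReal (2 * h) := by
                rw [← ENNReal.ofReal_add hh0.le hh0.le]; ring_nf
        have hEvol : ENNReal.ofReal (xR - h) ≤ volume E := by
          have hcover : Ico 0 yR ⊆ E ∪ Iab := by
            intro x hx
            by_cases hxI : x ∈ Iab
            · exact Or.inr hxI
            · exact Or.inl ⟨hx, hxI⟩
          have h1 : ENNReal.ofReal yR ≤ volume E + ENNReal.ofReal (2 * h) := by
            calc ENNReal.ofReal yR = volume (Ico 0 yR) := by simp [Real.volume_Ico]
              _ ≤ volume (E ∪ Iab) := measure_mono hcover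
              _ ≤ volume E + volume Iab := measure_union_le _ _
              _ ≤ volume E + ENNReal.ofReal (2 * h) := by gcongr
          have h2 : ENNReal.ofReal (xR - h) + ENNReal.ofReal (2 * h)
              ≤ volume E + ENNReal.ofReal (2 * h) := by
            calc ENNReal.ofReal (xR - h) + ENNReal.ofReal (2 * h)
                = ENNReal.ofReal (xR + h) := by
                  rw [← ENNReal.ofReal_add (by linarith) (by linarith)]; ring_nf
              _ ≤ ENNReal.ofReal yR := by apply ENNReal.ofReal_le_ofReal; linarith
              _ ≤ volume E + ENNReal.ofReal (2 * h) := h1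
          exact (ENNReal.add_le_add_iff_right ENNReal.ofReal_ne_top).mp h2
        obtain ⟨U, hUE, hUmeas, hUvol⟩ := darboux E hEmeas hEfin (xR - h) (by linarith) hEvol
        have hUsub : U ⊆ Ico 0 yR := hUE.trans diff_subset
        have key1 : ∀ t : ℝ, 0 ≤ t → t + h ≤ yR → Ico t (t+h) ⊆ Iab →
            κ (Ico t (t + h)) + κ U = c := by
          intro t ht0 hty htI
          have hdisj : Disjoint (Ico t (t+h)) U := by
            refine Set.disjoint_left.2 fun x hxI hxU => ?_
            exact (hUE hxU).2 (htI hxI)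
          have hvol : volume (Ico t (t+h) ∪ U) = ENNReal.ofReal xR := by
            rw [measure_union hdisj hUmeas, Real.volume_Ico, hUvol,
              ← ENNReal.ofReal_add (by linarith) (by linarith)]
            ring_nf
          have := H (Ico t (t+h) ∪ U) (measurableSet_Ico.union hUmeas)
            (union_subset (fun x hx => ⟨le_trans ht0 hx.1, lt_of_lt_of_le hx.2 hty⟩) hUsub)
            hvol
          rwa [measure_union hdisj hUmeas] at this
        have ha := key1 a ha0 hay subset_union_left
        have hb := key1 b hb0 hby subset_union_right
        exact cancel_add_right (measure_ne_top κ U) (ha.trans hb.symm)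
      intro a ha0 hay
      have := main2 a 0 ha0 hay le_rfl (by linarith)
      simpa using this
    -- partition identity
    have hpart : ∀ j : ℕ, j ≤ N → κ (Ico 0 ((j : ℝ) * h)) = (j : ℝ≥0∞) * κ (Ico 0 h) := by
      intro j hj
      induction j with
      | zero => simp
      | succ i ih =>
        have hiN : i ≤ N := le_trans (Nat.le_succ i) hj
        have hi' := ih hiN
        have hih : (0:ℝ) ≤ (i:ℝ) * h := by positivity
        have hiy : (i:ℝ) * h + h ≤ yR := by
          have : ((i:ℝ) + 1) * h ≤ (N:ℝ) * h := by
            apply mul_le_mul_of_nonneg_right _ hh0.le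
            exact_mod_cast hj
          have hNh : (N:ℝ) * h = yR := by
            rw [hdefh]; field_simp
          nlinarith
        have hsplit : Ico (0:ℝ) (((i:ℕ)+1 : ℕ) * h) =
            Ico 0 ((i:ℝ)*h) ∪ Ico ((i:ℝ)*h) ((i:ℝ)*h + h) := by
          rw [Ico_union_Ico_eq_Ico hih (by linarith)]
          norm_num
          ring_nf
        rw [hsplit, measure_union (Ico_disjoint_Ico_same) measurableSet_Ico, hi',
          stepA ((i:ℝ)*h) hih hiy]
        push_cast
        ring
    have hNh : (N:ℝ) * h = yR := by rw [hdefh]; field_simp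
    have htot : (N : ℝ≥0∞) * κ (Ico 0 h) = 1 := by
      rw [← hpart N le_rfl, hNh, hκy]
    -- floor
    set k : ℕ := ⌊xR / h⌋₊ with hkdef
    have hk1 : (k : ℝ) * h ≤ xR := by
      have := Nat.floor_le (le_of_lt (div_pos hx0 hh0))
      calc (k:ℝ) * h ≤ (xR / h) * h := by apply mul_le_mul_of_nonneg_right this hh0.le
        _ = xR := by field_simp
    have hk2 : xR < ((k:ℝ) + 1) * h := by
      have := Nat.lt_floor_add_one (xR / h)
      calc xR = (xR / h) * h := by field_simp
        _ < ((k:ℝ) + 1) * h := by apply mul_lt_mul_of_pos_right this hh0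
    have hkN : k + 1 ≤ N := by
      have hlt : (k : ℝ) < N := by
        have h1 : (k:ℝ) * h ≤ xR := hk1
        by_contra hcon
        push_neg at hcon
        have : (N:ℝ) * h ≤ (k:ℝ) * h := mul_le_mul_of_nonneg_right hcon hh0.le
        rw [hNh] at this
        linarith
      exact_mod_cast Nat.succ_le_of_lt (by exact_mod_cast hlt)
    -- lower bound : (k:ℝ≥0∞) * d ≤ c
    have hlow : (k : ℝ≥0∞) * κ (Ico 0 h) ≤ c := by
      have hE' : volume (Ico ((k:ℝ)*h) yR) = ENNReal.ofReal (yR - (k:ℝ)*h) := by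
        simp [Real.volume_Ico]
      obtain ⟨U, hUE, hUmeas, hUvol⟩ := darboux (Ico ((k:ℝ)*h) yR) measurableSet_Ico
        (by rw [hE']; exact ENNReal.ofReal_ne_top) (xR - (k:ℝ)*h) (by linarith)
        (by rw [hE']; exact ENNReal.ofReal_le_ofReal (by linarith))
      have hkh0 : (0:ℝ) ≤ (k:ℝ)*h := by positivity
      have hdisj : Disjoint (Ico (0:ℝ) ((k:ℝ)*h)) U :=
        Set.disjoint_left.2 fun x hxI hxU => absurd ((hUE hxU).1) (not_le.2 hxI.2)
      have hvol : volume (Ico (0:ℝ) ((k:ℝ)*h) ∪ U) = ENNReal.ofReal xR := by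
        rw [measure_union hdisj hUmeas, Real.volume_Ico, hUvol,
          ← ENNReal.ofReal_add (by linarith) (by linarith)]
        ring_nf
      have hsub : Ico (0:ℝ) ((k:ℝ)*h) ∪ U ⊆ Ico 0 yR := by
        apply union_subset
        · exact Ico_subset_Ico le_rfl (by nlinarith)
        · exact hUE.trans (Ico_subset_Ico hkh0 le_rfl)
      have := H _ (measurableSet_Ico.union hUmeas) hsub hvol
      rw [measure_union hdisj hUmeas] at this
      rw [← this, ← hpart k (le_trans (Nat.le_succ k) hkN)]
      exact le_add_right le_rfl
    -- upper bound : c ≤ (k+1 : ℝ≥0∞) * d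
    have hup : c ≤ ((k:ℝ≥0∞) + 1) * κ (Ico 0 h) := by
      have hE'' : volume (Ico (0:ℝ) (((k:ℝ)+1)*h)) = ENNReal.ofReal (((k:ℝ)+1)*h) := by
        simp [Real.volume_Ico]
      obtain ⟨U, hUE, hUmeas, hUvol⟩ := darboux (Ico (0:ℝ) (((k:ℝ)+1)*h)) measurableSet_Ico
        (by rw [hE'']; exact ENNReal.ofReal_ne_top) xR hx0.le
        (by rw [hE'']; exact ENNReal.ofReal_le_ofReal hk2.le)
      have hky : ((k:ℝ)+1) * h ≤ yR := by
        have : ((k:ℝ)+1) * h ≤ (N:ℝ) * h := by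
          apply mul_le_mul_of_nonneg_right _ hh0.le
          exact_mod_cast hkN
        linarith [hNh]
      have := H U hUmeas (hUE.trans (Ico_subset_Ico le_rfl hky)) hUvol
      rw [← this]
      calc κ U ≤ κ (Ico (0:ℝ) (((k:ℝ)+1)*h)) := measure_mono hUE
        _ = ((k:ℝ≥0∞)+1) * κ (Ico 0 h) := by
            have := hpart (k+1) hkN
            push_cast at this ⊢
            convert this using 2
      
    -- convert to reals
    have hdne : κ (Ico 0 h) ≠ ⊤ := measure_ne_top κ _
    set dR : ℝ := (κ (Ico 0 h)).toReal with hdR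
    have hNd : (N : ℝ) * dR = 1 := by
      have := congrArg ENNReal.toReal htot
      simpa [ENNReal.toReal_mul] using this
    have hcR1 : (k : ℝ) * dR ≤ c.toReal := by
      have := ENNReal.toReal_mono hcne hlow
      simpa [ENNReal.toReal_mul] using this
    have hcR2 : c.toReal ≤ ((k:ℝ) + 1) * dR := by
      have := ENNReal.toReal_mono (by
        exact ENNReal.mul_ne_top (by simp) hdne) hup
      simpa [ENNReal.toReal_mul, ENNReal.toReal_add, hdne] using this
    have hdRval : dR = 1 / N := by
      field_simp at hNd ⊢
      linarith
    have hx1 : (k:ℝ) / N ≤ xR / yR := by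
      rw [div_le_div_iff₀ (by exact_mod_cast hN0) hy]
      calc (k:ℝ) * yR = (k:ℝ) * ((N:ℝ) * h) := by rw [hNh]
        _ = ((k:ℝ) * h) * N := by ring
        _ ≤ xR * N := by
            apply mul_le_mul_of_nonneg_right hk1
            positivity
    have hx2 : xR / yR ≤ ((k:ℝ)+1) / N := by
      rw [div_le_div_iff₀ hy (by exact_mod_cast hN0)]
      calc xR * N ≤ (((k:ℝ)+1) * h) * N := by
            apply mul_le_mul_of_nonneg_right hk2.le
            positivity
        _ = ((k:ℝ)+1) * ((N:ℝ) * h) := by ring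
        _ = ((k:ℝ)+1) * yR := by rw [hNh]
    rw [abs_le]
    rw [hdRval] at hcR1 hcR2
    constructor
    · have : ((k:ℝ)+1)/N - (k:ℝ)/N = 1/N := by field_simp; ring
      have h1 : (k:ℝ)/N = (k:ℝ) * (1/N) := by ring
      have h2 : ((k:ℝ)+1)/N = ((k:ℝ)+1) * (1/N) := by ring
      linarith [hcR1, hx2]
    · have h1 : (k:ℝ)/N = (k:ℝ) * (1/N) := by ring
      have h2 : ((k:ℝ)+1)/N = ((k:ℝ)+1) * (1/N) := by ring
      linarith [hcR2, hx1]
  -- conclude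
  have hres : c.toReal = xR / yR := by
    apply eq_of_forall_dist_le
    intro ε hε
    obtain ⟨N, hN⟩ := exists_nat_gt (max (max (yR/xR) (yR/(yR-xR))) (1/ε))
    have hyx : 0 < yR - xR := by linarith
    have hN1 : (0:ℝ) < N := by
      have : (0:ℝ) < yR / xR := by positivity
      have h2 : yR / xR ≤ max (max (yR/xR) (yR/(yR-xR))) (1/ε) :=
        le_max_of_le_left (le_max_left _ _)
      linarith
    have hN0 : 0 < N := by exact_mod_cast hN1
    have c1 : yR / N ≤ xR := by
      rw [div_le_iff₀ hN1]
      have h2 : yR / xR < N := lt_of_le_of_lt (le_max_of_le_left (le_max_left _ _)) hN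
      rw [div_lt_iff₀ hx0] at h2
      linarith
    have c2 : yR / N ≤ yR - xR := by
      rw [div_le_iff₀ hN1]
      have h2 : yR / (yR - xR) < N := lt_of_le_of_lt (le_max_of_le_left (le_max_right _ _)) hN
      rw [div_lt_iff₀ hyx] at h2
      linarith
    have c3 : (1:ℝ) / N ≤ ε := by
      have h2 : 1 / ε < N := lt_of_le_of_lt (le_max_right _ _) hN
      rw [div_lt_iff₀ hε] at h2
      rw [div_le_iff₀ hN1]
      linarith
    have := main N c1 c2 hN0
    rw [Real.dist_eq]
    linarith
  rw [← hres]
  exact (ENNReal.ofReal_toReal hcne).symm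





lemma pushPM_toMeasure {W W' : Type} [MeasurableSpace W] [MeasurableSpace W']
    {f : W → W'} (hf : Measurable f) (μ : ProbabilityMeasure W) (s : Set W')
    (hs : MeasurableSet s) :
    (pushPM hf μ : Measure W') s = (μ : Measure W) (f ⁻¹' s) := by
  rw [pushPM, ProbabilityMeasure.toMeasure_map]
  exact Measure.map_apply hf hs

/-- The bridging step: two surjections onto the same small space with identical
pushforwards transfer the singleton update. -/
lemma bridge {W V T : Type} [MeasurableSpace W] [MeasurableSpace V] [MeasurableSpace T]
    (U : UpdFamily) (h2 : P2 U) {f : W → T} (hf : Measurable f) (hfs : Function.Surjective f)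
    {g : V → T} (hg : Measurable g) (hgs : Function.Surjective g)
    (Pr Pr' : ProbabilityMeasure W) (Q : ProbabilityMeasure V)
    (hpush : pushPM hg Q = pushPM hf Pr) (D : Set T) (hD : MeasurableSet D)
    (hsing : U W {Pr} (f ⁻¹' D) = {Pr'}) :
    pushPM hg '' (U V {Q} (g ⁻¹' D)) = {pushPM hf Pr'} := by
  have e1 := h2 W T f hf hfs {Pr} D hD
  have e2 := h2 V T g hg hgs {Q} D hD
  rw [image_singleton, hsing, image_singleton] at e1
  rw [image_singleton, hpush, e1] at e2
  exact e2.symm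

noncomputable def Phat (yE : ℝ≥0∞) : Measure ℝ :=
  volume.restrict (Ico 0 yE.toReal) + ((1 : ℝ≥0∞) - yE) • Measure.dirac (-1)

lemma Phat_apply (yE : ℝ≥0∞) {S : Set ℝ} (hS : MeasurableSet S) :
    Phat yE S = volume (S ∩ Ico 0 yE.toReal)
      + (1 - yE) * (if (-1 : ℝ) ∈ S then 1 else 0) := by
  rw [Phat, Measure.add_apply, Measure.restrict_apply hS, Measure.smul_apply,
    Measure.dirac_apply' _ hS, smul_eq_mul, Set.indicator_apply]
  simp only [Pi.one_apply]

lemma Phat_isProb (yE : ℝ≥0∞) (h1 : yE ≤ 1) : IsProbabilityMeasure (Phat yE) := by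
  constructor
  have : Phat yE univ = volume (univ ∩ Ico 0 yE.toReal) + (1 - yE) * 1 := by
    rw [Phat_apply yE MeasurableSet.univ]
    simp
  rw [this, univ_inter, Real.volume_Ico, sub_zero, mul_one,
    ENNReal.ofReal_toReal (by exact ne_top_of_le_ne_top ENNReal.one_ne_top h1)]
  exact add_tsub_cancel_of_le h1

lemma pm_coe_one {W : Type} [MeasurableSpace W] (μ : ProbabilityMeasure W) (s : Set W)
    (h : μ s = 1) : (μ : Measure W) s = 1 := by
  rw [← ProbabilityMeasure.ennreal_coeFn_eq_coeFn_toMeasure, h]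
  simp

lemma pm_coe_zero {W : Type} [MeasurableSpace W] (μ : ProbabilityMeasure W) (s : Set W)
    (h : μ s = 0) : (μ : Measure W) s = 0 := by
  rw [← ProbabilityMeasure.ennreal_coeFn_eq_coeFn_toMeasure, h]
  simp


lemma mainH (U : UpdFamily) (h1 : P1 U) (h2 : P2 U)
    (W : Type) [MeasurableSpace W] (Pr Pr' : ProbabilityMeasure W) (B : Set W)
    (hB : MeasurableSet B) (hsing : U W {Pr} B = {Pr'})
    (hBc : Bᶜ.Nonempty)
    (A' : Set W) (hA' : MeasurableSet A') (hA'B : A' ⊆ B)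
    (hA'ne : A'.Nonempty) (hBA'ne : (B \ A').Nonempty)
    (hy0 : (Pr : Measure W) B ≠ 0) :
    (Pr' : Measure W) A' = ((Pr : Measure W) B)⁻¹ * (Pr : Measure W) A' := by
  set yE := (Pr : Measure W) B with hyE
  have hy1 : yE ≤ 1 := prob_le_one
  have hytop : yE ≠ ⊤ := ne_top_of_le_ne_top ENNReal.one_ne_top hy1
  set yR := yE.toReal with hyRdef
  have hyR0 : 0 < yR := ENNReal.toReal_pos hy0 hytop
  have hofy : ENNReal.ofReal yR = yE := ENNReal.ofReal_toReal hytop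
  set xE := (Pr : Measure W) A' with hxE
  have hxyE : xE ≤ yE := measure_mono hA'B
  have hxtop : xE ≠ ⊤ := ne_top_of_le_ne_top hytop hxyE
  haveI hQP : IsProbabilityMeasure (Phat yE) := Phat_isProb yE hy1
  set Q : ProbabilityMeasure ℝ := ⟨Phat yE, hQP⟩ with hQdef
  -- the map f : W → Fin 3
  set f : W → Fin 3 := fun w => if w ∈ A' then 0 else if w ∈ B then 1 else 2 with hfdef
  have hfm : Measurable f :=
    Measurable.ite hA' measurable_const (Measurable.ite hB measurable_const measurable_const)
  have hf0 : f ⁻¹' {0} = A' := by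
    ext w; by_cases h1 : w ∈ A' <;> by_cases h2 : w ∈ B <;> simp [hfdef, h1, h2]
  have hf1 : f ⁻¹' {1} = B \ A' := by
    ext w
    by_cases h1 : w ∈ A'
    · have h2 := hA'B h1; simp [hfdef, h1, h2]
    · by_cases h2 : w ∈ B <;> simp [hfdef, h1, h2]
  have hf2 : f ⁻¹' {2} = Bᶜ := by
    ext w
    by_cases h1 : w ∈ A'
    · have h2 := hA'B h1; simp [hfdef, h1, h2]
    · by_cases h2 : w ∈ B <;> simp [hfdef, h1, h2]
  have hfD : f ⁻¹' {0, 1} = B := by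
    have : ({0, 1} : Set (Fin 3)) = {0} ∪ {1} := rfl
    rw [this, preimage_union, hf0, hf1]
    rw [union_diff_self]
    exact union_eq_self_of_subset_left hA'B
  have hfs : Function.Surjective f := by
    intro t
    fin_cases t
    · obtain ⟨w, hw⟩ := hA'ne
      exact ⟨w, by simp [hfdef, hw]⟩
    · obtain ⟨w, hwB, hwA⟩ := hBA'ne
      exact ⟨w, by simp [hfdef, hwA, hwB]⟩
    · obtain ⟨w, hw⟩ := hBc
      have hwA : w ∉ A' := fun h => hw (hA'B h)
      have hwB : w ∉ B := hw
      exact ⟨w, by simp [hfdef, hwA, hwB]⟩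
  have hm1 : (-1 : ℝ) ∉ Ico 0 yR := by simp only [mem_Ico]; intro h; linarith
  set Ub := U ℝ {Q} (Ico 0 yR) with hUbdef
  -- the claim
  have claim : ∀ S : Set ℝ, MeasurableSet S → S ⊆ Ico 0 yR → S.Nonempty →
      (Ico 0 yR \ S).Nonempty → volume S = xE →
      Ub.Nonempty ∧ ∀ lam ∈ Ub, (lam : Measure ℝ) S = (Pr' : Measure W) A' := by
    intro S hS hSsub hSne hDiffne hSvol
    set g : ℝ → Fin 3 := fun u => if u ∈ S then 0 else if u ∈ Ico 0 yR then 1 else 2 with hgdef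
    have hgm : Measurable g :=
      Measurable.ite hS measurable_const
        (Measurable.ite measurableSet_Ico measurable_const measurable_const)
    have hgval : ∀ u : ℝ, (u ∈ S → g u = 0) ∧ (u ∈ Ico 0 yR \ S → g u = 1) ∧
        (u ∉ Ico 0 yR → u ∉ S → g u = 2) := by
      intro u
      refine ⟨fun h => by simp only [hgdef]; rw [if_pos h], fun h => ?_, fun h h' => ?_⟩
      · simp only [hgdef]; rw [if_neg h.2, if_pos h.1]
      · simp only [hgdef]; rw [if_neg h', if_neg h]
    have hg0 : g ⁻¹' {0} = S := by
      ext u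
      simp only [mem_preimage, mem_singleton_iff]
      constructor
      · intro h
        by_contra h1
        by_cases h2 : u ∈ Ico 0 yR
        · rw [(hgval u).2.1 ⟨h2, h1⟩] at h; exact absurd h (by decide)
        · rw [(hgval u).2.2 h2 h1] at h; exact absurd h (by decide)
      · exact fun h => (hgval u).1 h
    have hg1 : g ⁻¹' {1} = Ico 0 yR \ S := by
      ext u
      simp only [mem_preimage, mem_singleton_iff]
      constructor
      · intro h
        by_cases h1 : u ∈ S
        · rw [(hgval u).1 h1] at h; exact absurd h (by decide)
        · by_cases h2 : u ∈ Ico 0 yR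
          · exact ⟨h2, h1⟩
          · rw [(hgval u).2.2 h2 h1] at h; exact absurd h (by decide)
      · exact fun h => (hgval u).2.1 h
    have hg2 : g ⁻¹' {2} = (Ico 0 yR)ᶜ := by
      ext u
      simp only [mem_preimage, mem_singleton_iff, mem_compl_iff]
      constructor
      · intro h h2
        by_cases h1 : u ∈ S
        · rw [(hgval u).1 h1] at h; exact absurd h (by decide)
        · rw [(hgval u).2.1 ⟨h2, h1⟩] at h; exact absurd h (by decide)
      · intro h
        have h1 : u ∉ S := fun hu => h (hSsub hu)
        exact (hgval u).2.2 h h1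
    have hgD : g ⁻¹' {0, 1} = Ico 0 yR := by
      have : ({0, 1} : Set (Fin 3)) = {0} ∪ {1} := rfl
      rw [this, preimage_union, hg0, hg1, union_diff_self]
      exact union_eq_self_of_subset_left hSsub
    have hgs : Function.Surjective g := by
      intro t
      fin_cases t
      · obtain ⟨u, hu⟩ := hSne
        exact ⟨u, (hgval u).1 hu⟩
      · obtain ⟨u, hu⟩ := hDiffne
        exact ⟨u, (hgval u).2.1 hu⟩
      · have h1 : (-1:ℝ) ∉ S := fun h => hm1 (hSsub h)
        exact ⟨-1, (hgval (-1)).2.2 hm1 h1⟩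
    have hpush : pushPM hgm Q = pushPM hfm Pr := by
      apply ProbabilityMeasure.toMeasure_injective
      apply Measure.ext_of_singleton
      intro t
      rw [pushPM_toMeasure hgm Q _ (measurableSet_singleton t),
        pushPM_toMeasure hfm Pr _ (measurableSet_singleton t)]
      have hQS : (Q : Measure ℝ) = Phat yE := rfl
      fin_cases t
      · show (Q : Measure ℝ) (g ⁻¹' {(0 : Fin 3)}) = (Pr : Measure W) (f ⁻¹' {(0 : Fin 3)})
        rw [hg0, hf0, hQS, Phat_apply yE hS]
        have h1 : (-1:ℝ) ∉ S := fun h => hm1 (hSsub h)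
        rw [if_neg h1, mul_zero, add_zero, inter_eq_self_of_subset_left hSsub, hSvol]
      · show (Q : Measure ℝ) (g ⁻¹' {(1 : Fin 3)}) = (Pr : Measure W) (f ⁻¹' {(1 : Fin 3)})
        rw [hg1, hf1, hQS, Phat_apply yE (measurableSet_Ico.diff hS)]
        have h1 : (-1:ℝ) ∉ Ico 0 yR \ S := fun h => hm1 h.1
        rw [if_neg h1, mul_zero, add_zero,
          inter_eq_self_of_subset_left diff_subset,
          measure_diff hSsub hS.nullMeasurableSet (by rw [hSvol]; exact hxtop),
          Real.volume_Ico, sub_zero, hofy, hSvol,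
          measure_diff hA'B hA'.nullMeasurableSet hxtop]
      · show (Q : Measure ℝ) (g ⁻¹' {(2 : Fin 3)}) = (Pr : Measure W) (f ⁻¹' {(2 : Fin 3)})
        rw [hg2, hf2, hQS, Phat_apply yE measurableSet_Ico.compl]
        have h1 : (-1:ℝ) ∈ (Ico 0 yR)ᶜ := hm1
        rw [if_pos h1, mul_one, compl_inter_self, measure_empty, zero_add,
          measure_compl hB hytop, measure_univ]
    have hmeasD : MeasurableSet ({0,1} : Set (Fin 3)) := by
      exact (measurableSet_singleton _).union (measurableSet_singleton _)
    have hbr := bridge U h2 hfm hfs hgm hgs Pr Pr' Q hpush {0,1} hmeasD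
      (by rw [hfD]; exact hsing)
    rw [hgD] at hbr
    constructor
    · have : (pushPM hgm '' Ub).Nonempty := by rw [hbr]; exact singleton_nonempty _
      exact Set.image_nonempty.mp this
    · intro lam hmem
      have : pushPM hgm lam ∈ pushPM hgm '' Ub := mem_image_of_mem _ hmem
      rw [hbr, mem_singleton_iff] at this
      have := congrArg (fun μ : ProbabilityMeasure (Fin 3) => (μ : Measure (Fin 3)) {0}) this
      try simp only at this
      rw [pushPM_toMeasure hgm lam _ (measurableSet_singleton _),
        pushPM_toMeasure hfm Pr' _ (measurableSet_singleton _), hg0, hf0] at this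
      exact this
  -- now the subcases
  haveI : IsProbabilityMeasure (Pr' : Measure W) := Pr'.prop
  set c := (Pr' : Measure W) A' with hcdef
  have hcne : c ≠ ⊤ := measure_ne_top _ _
  have hP1u : ∀ lam ∈ Ub, (lam : Measure ℝ) (Ico 0 yR) = 1 := by
    intro lam hmem
    exact pm_coe_one lam _ (h1 ℝ {Q} (Ico 0 yR) measurableSet_Ico lam hmem)
  have q0 : (0:ℝ) ∈ Ico 0 yR := ⟨le_rfl, hyR0⟩
  have q2 : yR/2 ∈ Ico 0 yR := ⟨by linarith, by linarith⟩
  have q20 : (yR/2 : ℝ) ≠ 0 := by positivity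
  have q4 : yR/4 ∈ Ico 0 yR := ⟨by linarith, by linarith⟩
  have q40 : (yR/4 : ℝ) ≠ 0 := by positivity
  have q42 : (yR/4 : ℝ) ≠ yR/2 := by
    intro h; rw [div_eq_div_iff (by norm_num) (by norm_num)] at h; linarith
  have hpairfin : ({0, yR/2} : Set ℝ).Finite := (finite_singleton _).insert _
  rcases eq_or_ne xE 0 with hx0 | hx0
  · -- null case
    rw [hx0, mul_zero]
    have h01 := claim {0} (measurableSet_singleton 0) (singleton_subset_iff.2 q0)
      (singleton_nonempty _) ⟨yR/4, q4, by simp [q40]⟩ (by rw [Real.volume_singleton, hx0])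
    have h02 := claim {yR/2} (measurableSet_singleton _) (singleton_subset_iff.2 q2)
      (singleton_nonempty _) ⟨yR/4, q4, by simp [q42]⟩ (by rw [Real.volume_singleton, hx0])
    have h03 := claim {0, yR/2} ((measurableSet_singleton _).insert 0)
      (insert_subset q0 (singleton_subset_iff.2 q2))
      ⟨0, mem_insert _ _⟩ ⟨yR/4, q4, by simp [q40, q42]⟩
      (by rw [hpairfin.measure_zero, hx0])
    obtain ⟨lam, hlam⟩ := h01.1
    have v1 := h01.2 lam hlam
    have v2 := h02.2 lam hlam
    have v3 := h03.2 lam hlam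
    have hsplit : ({0, yR/2} : Set ℝ) = {0} ∪ {yR/2} := by rw [singleton_union]
    rw [hsplit, measure_union (by simp [q20, disjoint_singleton]; exact fun h => q20 h.symm)
      (measurableSet_singleton _), v1, v2] at v3
    have : (0 : ℝ≥0∞) + c = c + c := by rw [zero_add, v3]
    exact (cancel_add_right hcne this).symm
  rcases eq_or_ne xE yE with hxyeq | hxyne
  · -- full case
    have hIp : ∀ p : ℝ, p ∈ Ico 0 yR → volume (Ico 0 yR \ {p}) = xE := by
      intro p _
      rw [measure_diff_null (Real.volume_singleton), Real.volume_Ico, sub_zero, hofy, hxyeq]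
    have hpair0 : volume (Ico 0 yR \ {0, yR/2}) = xE := by
      rw [measure_diff_null (hpairfin.measure_zero _), Real.volume_Ico, sub_zero, hofy, hxyeq]
    have hdiffmem : ∀ p : ℝ, p ∈ Ico 0 yR → (Ico 0 yR \ (Ico 0 yR \ {p})).Nonempty := by
      intro p hp
      exact ⟨p, hp, fun h => h.2 rfl⟩
    have h01 := claim (Ico 0 yR \ {0}) (measurableSet_Ico.diff (measurableSet_singleton _))
      diff_subset ⟨yR/4, q4, by simp [q40]⟩ (hdiffmem 0 q0) (hIp 0 q0)
    have h02 := claim (Ico 0 yR \ {yR/2}) (measurableSet_Ico.diff (measurableSet_singleton _))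
      diff_subset ⟨yR/4, q4, by simp [q42]⟩ (hdiffmem _ q2) (hIp _ q2)
    have h03 := claim (Ico 0 yR \ {0, yR/2})
      (measurableSet_Ico.diff ((measurableSet_singleton _).insert 0))
      diff_subset ⟨yR/4, q4, by simp [q40, q42]⟩
      ⟨0, q0, fun h => h.2 (mem_insert _ _)⟩ hpair0
    obtain ⟨lam, hlam⟩ := h01.1
    have v1 := h01.2 lam hlam
    have v2 := h02.2 lam hlam
    have v3 := h03.2 lam hlam
    have hs1 : Ico 0 yR \ {0} = (Ico 0 yR \ {0, yR/2}) ∪ {yR/2} := by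
      ext u
      simp only [mem_diff, mem_singleton_iff, mem_union, mem_insert_iff]
      constructor
      · intro ⟨huI, hu0⟩
        by_cases h : u = yR/2
        · exact Or.inr h
        · exact Or.inl ⟨huI, by tauto⟩
      · rintro (⟨huI, hu⟩ | h)
        · exact ⟨huI, by tauto⟩
        · exact ⟨h ▸ q2, h ▸ q20⟩
    have hs2 : Ico 0 yR \ {yR/2} = (Ico 0 yR \ {0, yR/2}) ∪ {0} := by
      ext u
      simp only [mem_diff, mem_singleton_iff, mem_union, mem_insert_iff]
      constructor
      · intro ⟨huI, hu0⟩
        by_cases h : u = 0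
        · exact Or.inr h
        · exact Or.inl ⟨huI, by tauto⟩
      · rintro (⟨huI, hu⟩ | h)
        · exact ⟨huI, by tauto⟩
        · exact ⟨h ▸ q0, by rw [h]; exact fun hh => q20 hh.symm⟩
    have hd1 : Disjoint (Ico 0 yR \ {0, yR/2}) {yR/2} :=
      Set.disjoint_left.2 fun u hu hu2 => hu.2 (by rw [mem_singleton_iff] at hu2; simp [hu2])
    have hd2 : Disjoint (Ico 0 yR \ {0, yR/2}) {0} :=
      Set.disjoint_left.2 fun u hu hu2 => hu.2 (by rw [mem_singleton_iff] at hu2; simp [hu2])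
    have w1 : c + (lam : Measure ℝ) {yR/2} = c := by
      conv_rhs => rw [← v1]
      rw [hs1, measure_union hd1 (measurableSet_singleton _), v3]
    have w2 : c + (lam : Measure ℝ) {0} = c := by
      conv_rhs => rw [← v2]
      rw [hs2, measure_union hd2 (measurableSet_singleton _), v3]
    have hz2 : (lam : Measure ℝ) {yR/2} = 0 := by
      refine ((ENNReal.add_right_inj hcne).mp ?_).symm
      rw [add_zero]; exact w1.symm
    have hz0 : (lam : Measure ℝ) {0} = 0 := by
      refine ((ENNReal.add_right_inj hcne).mp ?_).symm
      rw [add_zero]; exact w2.symm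
    have htotal : (lam : Measure ℝ) (Ico 0 yR) = c := by
      have hsI : Ico 0 yR = (Ico 0 yR \ {0}) ∪ {0} := by
        rw [diff_union_self, union_eq_self_of_subset_right (singleton_subset_iff.2 q0)]
      rw [hsI, measure_union (Set.disjoint_left.2 fun u hu hu2 => hu.2 hu2)
        (measurableSet_singleton _), v1, hz0, add_zero]
    rw [hP1u lam hlam] at htotal
    rw [← htotal, hxyeq, ENNReal.inv_mul_cancel hy0 hytop]
  · -- middle case
    set xR := xE.toReal with hxRdef
    have hxR0 : 0 < xR := ENNReal.toReal_pos hx0 hxtop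
    have hofx : ENNReal.ofReal xR = xE := ENNReal.ofReal_toReal hxtop
    have hxRyR : xR < yR := by
      have hlt : xE < yE := lt_of_le_of_ne hxyE hxyne
      exact (ENNReal.toReal_lt_toReal hxtop hytop).mpr hlt
    have hS0 := claim (Ico 0 xR) measurableSet_Ico (Ico_subset_Ico le_rfl hxRyR.le)
      (nonempty_Ico.2 hxR0) ⟨(xR+yR)/2, ⟨by linarith, by linarith⟩, by
        simp only [mem_Ico, not_and, not_lt]
        intro _; linarith⟩
      (by rw [Real.volume_Ico, sub_zero, hofx])
    obtain ⟨lam, hlam⟩ := hS0.1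
    haveI : IsProbabilityMeasure (lam : Measure ℝ) := lam.prop
    have hkey := key yR xR hxR0 hxRyR (lam : Measure ℝ) (hP1u lam hlam) c ?_
    · rw [hkey, ENNReal.ofReal_div_of_pos hyR0, hofx, hofy,
        ENNReal.div_eq_inv_mul]
    · intro S hS hsub hvol
      have hvol' : volume S = xE := by rw [hvol, hofx]
      have hSne : S.Nonempty := nonempty_of_measure_ne_zero (by rw [hvol']; exact hx0)
      have hdne : (Ico 0 yR \ S).Nonempty := by
        apply nonempty_of_measure_ne_zero (μ := volume)
        rw [measure_diff hsub hS.nullMeasurableSet (by rw [hvol']; exact hxtop),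
          Real.volume_Ico, sub_zero, hofy, hvol']
        intro hcon
        have := tsub_eq_zero_iff_le.mp hcon
        exact absurd (lt_of_le_of_ne hxyE hxyne) (not_lt.2 this)
      exact (claim S hS hsub hSne hdne hvol').2 lam hlam

lemma univH (U : UpdFamily) (h1 : P1 U) (h2 : P2 U)
    (W : Type) [MeasurableSpace W] (Pr Pr' : ProbabilityMeasure W)
    (hsing : U W {Pr} univ = {Pr'})
    (A' : Set W) (hA' : MeasurableSet A')
    (hA'ne : A'.Nonempty) (hA'c : A'ᶜ.Nonempty) :
    (Pr' : Measure W) A' = (Pr : Measure W) A' := by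
  haveI hQP : IsProbabilityMeasure (Phat 1) := Phat_isProb 1 le_rfl
  haveI : IsProbabilityMeasure (Pr' : Measure W) := Pr'.prop
  set Q : ProbabilityMeasure ℝ := ⟨Phat 1, hQP⟩ with hQdef
  have hPh : ∀ S : Set ℝ, MeasurableSet S → Phat 1 S = volume (S ∩ Ico 0 (1:ℝ)) := by
    intro S hS
    rw [Phat_apply 1 hS]
    simp
  set xE := (Pr : Measure W) A' with hxE
  have hx1 : xE ≤ 1 := prob_le_one
  have hxtop : xE ≠ ⊤ := ne_top_of_le_ne_top ENNReal.one_ne_top hx1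
  set f : W → Fin 2 := fun w => if w ∈ A' then 0 else 1 with hfdef
  have hfm : Measurable f := Measurable.ite hA' measurable_const measurable_const
  have hf0 : f ⁻¹' {0} = A' := by
    ext w; by_cases h : w ∈ A' <;> simp [hfdef, h]
  have hf1 : f ⁻¹' {1} = A'ᶜ := by
    ext w; by_cases h : w ∈ A' <;> simp [hfdef, h]
  have hfs : Function.Surjective f := by
    intro t
    fin_cases t
    · obtain ⟨w, hw⟩ := hA'ne
      exact ⟨w, by simp [hfdef, hw]⟩
    · obtain ⟨w, hw⟩ := hA'c
      have hw' : w ∉ A' := hw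
      exact ⟨w, by simp [hfdef, hw']⟩
  set Ub := U ℝ {Q} univ with hUbdef
  set c := (Pr' : Measure W) A' with hcdef
  have hcne : c ≠ ⊤ := measure_ne_top _ _
  have claim : ∀ S : Set ℝ, MeasurableSet S → S.Nonempty → Sᶜ.Nonempty →
      volume (S ∩ Ico 0 (1:ℝ)) = xE →
      Ub.Nonempty ∧ ∀ lam ∈ Ub, (lam : Measure ℝ) S = c := by
    intro S hS hSne hScne hSvol
    set g : ℝ → Fin 2 := fun u => if u ∈ S then 0 else 1 with hgdef
    have hgm : Measurable g := Measurable.ite hS measurable_const measurable_const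
    have hg0 : g ⁻¹' {0} = S := by
      ext u; by_cases h : u ∈ S <;> simp [hgdef, h]
    have hg1 : g ⁻¹' {1} = Sᶜ := by
      ext u; by_cases h : u ∈ S <;> simp [hgdef, h]
    have hgs : Function.Surjective g := by
      intro t
      fin_cases t
      · obtain ⟨u, hu⟩ := hSne
        exact ⟨u, by simp [hgdef, hu]⟩
      · obtain ⟨u, hu⟩ := hScne
        have hu' : u ∉ S := hu
        exact ⟨u, by simp [hgdef, hu']⟩
    have hQval : (Q : Measure ℝ) S = xE := by
      have : (Q : Measure ℝ) = Phat 1 := rfl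
      rw [this, hPh S hS, hSvol]
    have hpush : pushPM hgm Q = pushPM hfm Pr := by
      apply ProbabilityMeasure.toMeasure_injective
      apply Measure.ext_of_singleton
      intro t
      rw [pushPM_toMeasure hgm Q _ (measurableSet_singleton t),
        pushPM_toMeasure hfm Pr _ (measurableSet_singleton t)]
      fin_cases t
      · show (Q : Measure ℝ) (g ⁻¹' {(0 : Fin 2)}) = (Pr : Measure W) (f ⁻¹' {(0 : Fin 2)})
        rw [hg0, hf0, hQval]
      · show (Q : Measure ℝ) (g ⁻¹' {(1 : Fin 2)}) = (Pr : Measure W) (f ⁻¹' {(1 : Fin 2)})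
        rw [hg1, hf1, measure_compl hS (measure_ne_top _ _),
          measure_compl hA' hxtop, measure_univ, measure_univ, hQval]
    have hbr := bridge U h2 hfm hfs hgm hgs Pr Pr' Q hpush univ MeasurableSet.univ
      (by rw [preimage_univ]; exact hsing)
    rw [preimage_univ] at hbr
    constructor
    · have : (pushPM hgm '' Ub).Nonempty := by rw [hbr]; exact singleton_nonempty _
      exact Set.image_nonempty.mp this
    · intro lam hmem
      have : pushPM hgm lam ∈ pushPM hgm '' Ub := mem_image_of_mem _ hmem
      rw [hbr, mem_singleton_iff] at this
      have := congrArg (fun μ : ProbabilityMeasure (Fin 2) => (μ : Measure (Fin 2)) {0}) this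
      try simp only at this
      rw [pushPM_toMeasure hgm lam _ (measurableSet_singleton _),
        pushPM_toMeasure hfm Pr' _ (measurableSet_singleton _), hg0, hf0] at this
      exact this
  have hm1 : (-1 : ℝ) ∉ Ico 0 (1:ℝ) := by simp only [mem_Ico]; intro h; linarith
  have hpairfin : ({0, 1/2} : Set ℝ).Finite := (finite_singleton _).insert _
  rcases eq_or_ne xE 0 with hx0 | hx0
  · rw [hx0]
    have volz : ∀ s : Set ℝ, s.Finite → volume (s ∩ Ico 0 (1:ℝ)) = xE := by
      intro s hs
      rw [hx0]
      exact measure_mono_null inter_subset_left (hs.measure_zero _)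
    have h01 := claim {0} (measurableSet_singleton 0) (singleton_nonempty _)
      ⟨-1, by norm_num⟩ (volz _ (finite_singleton _))
    have h02 := claim {1/2} (measurableSet_singleton _) (singleton_nonempty _)
      ⟨-1, by norm_num⟩ (volz _ (finite_singleton _))
    have h03 := claim {0, 1/2} ((measurableSet_singleton _).insert 0)
      ⟨0, mem_insert _ _⟩ ⟨-1, by norm_num⟩ (volz _ hpairfin)
    obtain ⟨lam, hlam⟩ := h01.1
    have v1 := h01.2 lam hlam
    have v2 := h02.2 lam hlam
    have v3 := h03.2 lam hlam
    have hsplit : ({0, 1/2} : Set ℝ) = {0} ∪ {1/2} := by rw [singleton_union]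
    rw [hsplit, measure_union (by rw [disjoint_singleton]; norm_num)
      (measurableSet_singleton _), v1, v2] at v3
    have : (0 : ℝ≥0∞) + c = c + c := by rw [zero_add, v3]
    exact (cancel_add_right hcne this).symm
  rcases eq_or_ne xE 1 with hxe1 | hxne1
  · -- xE = 1
    have hvolc : ∀ s : Set ℝ, s.Finite → volume (sᶜ ∩ Ico 0 (1:ℝ)) = xE := by
      intro s hs
      have : sᶜ ∩ Ico 0 (1:ℝ) = Ico 0 (1:ℝ) \ s := by rw [diff_eq, inter_comm]
      rw [this, measure_diff_null (hs.measure_zero _), Real.volume_Ico, hxe1]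
      norm_num
    have h01 := claim {(0:ℝ)}ᶜ (measurableSet_singleton _).compl
      ⟨-1, by norm_num⟩ (by rw [compl_compl]; exact singleton_nonempty _)
      (hvolc _ (finite_singleton _))
    have h02 := claim {(1/2:ℝ)}ᶜ (measurableSet_singleton _).compl
      ⟨-1, by norm_num⟩ (by rw [compl_compl]; exact singleton_nonempty _)
      (hvolc _ (finite_singleton _))
    have h03 := claim ({0, 1/2} : Set ℝ)ᶜ ((measurableSet_singleton _).insert 0).compl
      ⟨-1, by norm_num⟩ (by rw [compl_compl]; exact ⟨0, mem_insert _ _⟩)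
      (hvolc _ hpairfin)
    obtain ⟨lam, hlam⟩ := h01.1
    have v1 := h01.2 lam hlam
    have v2 := h02.2 lam hlam
    have v3 := h03.2 lam hlam
    have hs1 : ({(0:ℝ)}ᶜ : Set ℝ) = ({0, 1/2} : Set ℝ)ᶜ ∪ {1/2} := by
      ext u
      simp only [mem_compl_iff, mem_singleton_iff, mem_union, mem_insert_iff, not_or]
      constructor
      · intro h
        by_cases h2 : u = 1/2
        · exact Or.inr h2
        · exact Or.inl ⟨h, h2⟩
      · rintro (⟨h, _⟩ | h)
        · exact h
        · rw [h]; norm_num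
    have hs2 : ({(1/2:ℝ)}ᶜ : Set ℝ) = ({0, 1/2} : Set ℝ)ᶜ ∪ {0} := by
      ext u
      simp only [mem_compl_iff, mem_singleton_iff, mem_union, mem_insert_iff, not_or]
      constructor
      · intro h
        by_cases h2 : u = 0
        · exact Or.inr h2
        · exact Or.inl ⟨h2, h⟩
      · rintro (⟨_, h⟩ | h)
        · exact h
        · rw [h]; norm_num
    have hd1 : Disjoint (({0, 1/2} : Set ℝ)ᶜ) {(1/2:ℝ)} :=
      Set.disjoint_left.2 fun u hu hu2 => by
        rw [mem_singleton_iff] at hu2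
        exact hu (by rw [hu2]; exact mem_insert_of_mem _ rfl)
    have hd2 : Disjoint (({0, 1/2} : Set ℝ)ᶜ) {(0:ℝ)} :=
      Set.disjoint_left.2 fun u hu hu2 => by
        rw [mem_singleton_iff] at hu2
        exact hu (by rw [hu2]; exact mem_insert _ _)
    have w1 : c + (lam : Measure ℝ) {(1/2:ℝ)} = c := by
      conv_rhs => rw [← v1]
      rw [hs1, measure_union hd1 (measurableSet_singleton _), v3]
    have w2 : c + (lam : Measure ℝ) {(0:ℝ)} = c := by
      conv_rhs => rw [← v2]
      rw [hs2, measure_union hd2 (measurableSet_singleton _), v3]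
    have hz0 : (lam : Measure ℝ) {(0:ℝ)} = 0 := by
      refine ((ENNReal.add_right_inj hcne).mp ?_).symm
      rw [add_zero]; exact w2.symm
    haveI : IsProbabilityMeasure (lam : Measure ℝ) := lam.prop
    have htotal : (1 : ℝ≥0∞) = c := by
      have := measure_add_measure_compl (μ := (lam : Measure ℝ))
        (measurableSet_singleton (0:ℝ))
      rw [measure_univ, hz0, zero_add, v1] at this
      exact this.symm
    rw [← htotal, hxe1]
  · -- middle case
    set xR := xE.toReal with hxRdef
    have hxR0 : 0 < xR := ENNReal.toReal_pos hx0 hxtop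
    have hofx : ENNReal.ofReal xR = xE := ENNReal.ofReal_toReal hxtop
    have hxR1 : xR < 1 := by
      have hlt : xE < 1 := lt_of_le_of_ne hx1 hxne1
      have := (ENNReal.toReal_lt_toReal hxtop ENNReal.one_ne_top).mpr hlt
      simpa using this
    have hIxsub : Ico 0 xR ⊆ Ico 0 (1:ℝ) := Ico_subset_Ico le_rfl hxR1.le
    have hvol0 : volume (Ico 0 xR ∩ Ico 0 (1:ℝ)) = xE := by
      rw [inter_eq_self_of_subset_left hIxsub, Real.volume_Ico, sub_zero, hofx]
    have hS0 := claim (Ico 0 xR) measurableSet_Ico (nonempty_Ico.2 hxR0)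
      ⟨-1, fun h => hm1 (hIxsub h)⟩ hvol0
    obtain ⟨lam, hlam⟩ := hS0.1
    haveI : IsProbabilityMeasure (lam : Measure ℝ) := lam.prop
    have v0 := hS0.2 lam hlam
    -- junk null set trick : lam (Ico 0 1) = 1
    have hS1 : volume ((Ico 0 xR ∪ (Ico 0 (1:ℝ))ᶜ) ∩ Ico 0 (1:ℝ)) = xE := by
      rw [union_inter_distrib_right, compl_inter_self, union_empty,
        inter_eq_self_of_subset_left hIxsub, Real.volume_Ico, sub_zero, hofx]
    have hmid : (xR + 1)/2 ∈ Ico 0 (1:ℝ) := ⟨by linarith, by linarith⟩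
    have hmidx : (xR + 1)/2 ∉ Ico 0 xR := by
      simp only [mem_Ico, not_and, not_lt]
      intro _; linarith
    have h1c := claim (Ico 0 xR ∪ (Ico 0 (1:ℝ))ᶜ)
      (measurableSet_Ico.union measurableSet_Ico.compl)
      ⟨-1, Or.inr hm1⟩
      ⟨(xR+1)/2, by
        simp only [compl_union, compl_compl, mem_inter_iff, mem_compl_iff]
        exact ⟨hmidx, hmid⟩⟩
      hS1
    have v1 := h1c.2 lam hlam
    have hdisj : Disjoint (Ico 0 xR) ((Ico 0 (1:ℝ))ᶜ) :=
      Set.disjoint_left.2 fun u hu hu2 => hu2 (hIxsub hu)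
    rw [measure_union hdisj measurableSet_Ico.compl, v0] at v1
    have hzc : (lam : Measure ℝ) ((Ico 0 (1:ℝ))ᶜ) = 0 := by
      refine ((ENNReal.add_right_inj hcne).mp ?_).symm
      rw [add_zero]; exact v1.symm
    have hIco1 : (lam : Measure ℝ) (Ico 0 (1:ℝ)) = 1 := by
      have := measure_add_measure_compl (μ := (lam : Measure ℝ)) (measurableSet_Ico
        (a := (0:ℝ)) (b := (1:ℝ)))
      rw [measure_univ, hzc, add_zero] at this
      exact this
    have hkey := key 1 xR hxR0 hxR1 (lam : Measure ℝ) hIco1 c ?_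
    · rw [hkey, div_one, hofx]
    · intro S hS hsub hvol
      have hvol' : volume (S ∩ Ico 0 (1:ℝ)) = xE := by
        rw [inter_eq_self_of_subset_left hsub, hvol, hofx]
      have hSne : S.Nonempty := nonempty_of_measure_ne_zero
        (μ := volume) (by rw [hvol, hofx]; exact hx0)
      exact (claim S hS hSne ⟨-1, fun h => hm1 (hsub h)⟩ hvol').2 lam hlam

end Helpers

/-- van Fraassen's theorem: under P1 and P2, a singleton update must
be conditioning. -/
theorem stmt1 (U : UpdFamily) (hbase : UpdBase U) (h1 : P1 U) (h2 : P2 U)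
    (W : Type) [MeasurableSpace W] (Pr Pr' : ProbabilityMeasure W) (B : Set W)
    (hB : MeasurableSet B) (hsing : U W {Pr} B = {Pr'}) :
    Pr' = condPM Pr B := by
  have hPr'mem : Pr' ∈ U W {Pr} B := by rw [hsing]; exact rfl
  have hUne : U W {Pr} B ≠ ∅ := by rw [hsing]; exact singleton_ne_empty _
  have hy0 : (Pr : Measure W) B ≠ 0 := by
    intro h0
    apply hUne
    apply hbase W {Pr} B
    intro μ hμ
    rw [mem_singleton_iff] at hμ
    subst hμ
    have h : (μ B : ℝ≥0∞) = 0 := by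
      rw [ProbabilityMeasure.ennreal_coeFn_eq_coeFn_toMeasure]; exact h0
    exact_mod_cast h
  haveI : IsProbabilityMeasure (Pr' : Measure W) := Pr'.prop
  have hPr'B : (Pr' : Measure W) B = 1 := pm_coe_one _ _ (h1 W {Pr} B hB Pr' hPr'mem)
  have hPr'Bc : (Pr' : Measure W) Bᶜ = 0 := by
    rw [measure_compl hB (measure_ne_top _ _), hPr'B, measure_univ, tsub_self]
  rw [show condPM Pr B = ⟨(Pr : Measure W)[|B], cond_isProbabilityMeasure hy0⟩ from dif_pos hy0]
  apply ProbabilityMeasure.toMeasure_injective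
  show (Pr' : Measure W) = (Pr : Measure W)[|B]
  ext s hs
  rw [cond_apply hB]
  have hred : (Pr' : Measure W) s = (Pr' : Measure W) (B ∩ s) := by
    have hsum := measure_inter_add_diff (μ := (Pr' : Measure W)) s hB
    have hz : (Pr' : Measure W) (s \ B) = 0 :=
      measure_mono_null (fun x hx => hx.2) hPr'Bc
    rw [hz, add_zero] at hsum
    rw [← hsum, inter_comm]
  rw [hred]
  set A' := B ∩ s with hA'def
  have hA' : MeasurableSet A' := hB.inter hs
  have hA'B : A' ⊆ B := inter_subset_left
  rcases eq_empty_or_nonempty A' with hem | hA'ne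
  · rw [hem, measure_empty, measure_empty, mul_zero]
  by_cases hBA' : B ⊆ A'
  · have hAB : A' = B := Subset.antisymm hA'B hBA'
    rw [hAB, hPr'B]
    exact (ENNReal.inv_mul_cancel hy0 (measure_ne_top _ _)).symm
  · have hBA'ne : (B \ A').Nonempty := by
      rw [not_subset] at hBA'
      obtain ⟨w, hwB, hwA⟩ := hBA'
      exact ⟨w, hwB, hwA⟩
    by_cases hBc : Bᶜ.Nonempty
    · exact mainH U h1 h2 W Pr Pr' B hB hsing hBc A' hA' hA'B hA'ne hBA'ne hy0
    · have hBu : B = univ := by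
        rw [← compl_empty_iff]
        exact not_nonempty_iff_eq_empty.mp hBc
      have hsing' : U W {Pr} univ = {Pr'} := hBu ▸ hsing
      have hA'c : A'ᶜ.Nonempty := by
        obtain ⟨w, hwB, hwA⟩ := hBA'ne
        exact ⟨w, hwA⟩
      have hres := univH U h1 h2 W Pr Pr' hsing' A' hA' hA'ne hA'c
      rw [hres, hBu, measure_univ, inv_one, one_mul]
end

section
/- If Upd satisfies P1–P4 and the quantity U(A,B) := sup over Pr' ∈ Upd(Pr,B) of Pr'(A)·Pr(B)/Pr(A) equals 1 for all measure spaces M, measures Pr, and events A ⊆ B with Pr(A) > 0, then Upd acts like conditioning on singletons: Upd(Pr,B) ⊆ {Pr(·|B)} whenever Pr(B) > 0. -/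
open MeasureTheory ProbabilityTheory Set
open scoped Classical NNReal ENNReal

noncomputable section Aux

lemma pushPM_apply' {W W' : Type} [MeasurableSpace W] [MeasurableSpace W']
    {f : W → W'} (hf : Measurable f) (μ : ProbabilityMeasure W) {s : Set W'}
    (hs : MeasurableSet s) :
    ((pushPM hf μ : Measure W')) s = (μ : Measure W) (f ⁻¹' s) := by
  rw [pushPM, ProbabilityMeasure.toMeasure_map, Measure.map_apply hf hs]

/-- The merging map `Fin 4 → Fin 3` used to split the positive cell. -/
def q43 : Fin 4 → Fin 3 := ![0, 1, 1, 2]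

/-- The lifted measure on `Fin 4` with weights `0, p/2, p/2, 1-p`. -/
def m4 (p : ℝ≥0∞) : Measure (Fin 4) :=
  (p / 2) • Measure.dirac 1 + (p / 2) • Measure.dirac 2 + (1 - p) • Measure.dirac 3

lemma m4_apply (p : ℝ≥0∞) (s : Set (Fin 4)) :
    m4 p s = (if (1 : Fin 4) ∈ s then p / 2 else 0)
      + (if (2 : Fin 4) ∈ s then p / 2 else 0)
      + (if (3 : Fin 4) ∈ s then 1 - p else 0) := by
  have hs : MeasurableSet s := by measurability
  simp [m4, Measure.dirac_apply' _ hs, indicator_apply, mul_ite]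

lemma m4_prob {p : ℝ≥0∞} (hp : p ≤ 1) : IsProbabilityMeasure (m4 p) := by
  constructor
  rw [show (univ : Set (Fin 4)) = univ from rfl, m4_apply]
  simp [ENNReal.add_halves, add_tsub_cancel_of_le hp]

/-- Cancellation helper in `ℝ≥0∞`. -/
lemma add_eq_of_le_of_le {a b a' b' : ℝ≥0∞} (ha : a ≤ a') (hb : b ≤ b')
    (hs : a + b = a' + b') (ha' : a' ≠ ∞) (hb' : b' ≠ ∞) : a = a' := by
  have h1 : a' + b' ≤ a' + b := by
    rw [← hs]; exact add_le_add_left ha b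
  have h2 : b' ≤ b := (ENNReal.add_le_add_iff_left ha').mp h1
  have h3 : b = b' := le_antisymm hb h2
  rw [h3] at hs
  exact (ENNReal.add_left_inj hb').mp hs

/-- Partition of a measure over the three cells `A`, `B \ A`, `Bᶜ`. -/
lemma meas_split {W : Type} [MeasurableSpace W] (μ : Measure W) {A B : Set W}
    (hA : MeasurableSet A) (hB : MeasurableSet B) (hAB : A ⊆ B) {s : Set W}
    (hs : MeasurableSet s) :
    μ s = μ (s ∩ A) + μ (s ∩ (B \ A)) + μ (s ∩ Bᶜ) := by
  have hdecomp : s = (s ∩ A) ∪ (s ∩ (B \ A)) ∪ (s ∩ Bᶜ) := by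
    ext w
    simp only [mem_union, mem_inter_iff, mem_diff, mem_compl_iff]
    by_cases hw1 : w ∈ A
    · exact ⟨fun h => Or.inl (Or.inl ⟨h, hw1⟩), fun h => by tauto⟩
    · tauto
  have hd1 : Disjoint (s ∩ A) (s ∩ (B \ A)) :=
    disjoint_sdiff_right.mono inter_subset_right inter_subset_right
  have hsub : (s ∩ A) ∪ (s ∩ (B \ A)) ⊆ B := by
    rintro w (⟨-, hw⟩ | ⟨-, hw⟩)
    · exact hAB hw
    · exact hw.1
  have hd2 : Disjoint ((s ∩ A) ∪ (s ∩ (B \ A))) (s ∩ Bᶜ) :=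
    (disjoint_compl_right (a := B)).mono hsub inter_subset_right
  calc μ s = μ ((s ∩ A) ∪ (s ∩ (B \ A)) ∪ (s ∩ Bᶜ)) := by rw [← hdecomp]
    _ = μ ((s ∩ A) ∪ (s ∩ (B \ A))) + μ (s ∩ Bᶜ) :=
        measure_union hd2 (hs.inter hB.compl)
    _ = μ (s ∩ A) + μ (s ∩ (B \ A)) + μ (s ∩ Bᶜ) := by
        rw [measure_union hd1 (hs.inter (hB.diff hA))]

/-- From `hsup`, every updated measure satisfies `ν(A)·Pr(B) ≤ Pr(A)` when `Pr(A) > 0`. -/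
lemma upd_le (U : UpdFamily)
    (hsup : ∀ (W : Type) [MeasurableSpace W] (Pr : ProbabilityMeasure W) (A B : Set W),
      MeasurableSet A → MeasurableSet B → A ⊆ B → 0 < Pr A →
      sSup {x : EReal | ∃ ν ∈ U W {Pr} B, x = (((ν A * Pr B / Pr A : ℝ≥0) : ℝ) : EReal)}
        = 1)
    {W : Type} [MeasurableSpace W] (Pr : ProbabilityMeasure W) {A B : Set W}
    (hA : MeasurableSet A) (hB : MeasurableSet B) (hAB : A ⊆ B) (hpos : 0 < Pr A)
    {ν : ProbabilityMeasure W} (hν : ν ∈ U W {Pr} B) :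
    ν A * Pr B ≤ Pr A := by
  have h := hsup W Pr A B hA hB hAB hpos
  have hx : (((ν A * Pr B / Pr A : ℝ≥0) : ℝ) : EReal)
      ∈ {x : EReal | ∃ ν' ∈ U W {Pr} B, x = (((ν' A * Pr B / Pr A : ℝ≥0) : ℝ) : EReal)} :=
    ⟨ν, hν, rfl⟩
  have hle := le_sSup hx
  rw [h, show (1 : EReal) = ((1 : ℝ) : EReal) by norm_num] at hle
  have h2 : ((ν A * Pr B / Pr A : ℝ≥0) : ℝ) ≤ 1 := EReal.coe_le_coe_iff.mp hle
  have h3 : (ν A * Pr B / Pr A : ℝ≥0) ≤ 1 := by exact_mod_cast h2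
  exact (div_le_one hpos).mp h3

/-- The core amplification step on `Fin 4`: merging the null cell `{0}` with a half-mass
cell and applying `hsup` bounds the merged mass by `1/2`. -/
lemma core_bound (U : UpdFamily)
    (h2 : P2 U)
    (hsup : ∀ (W : Type) [MeasurableSpace W] (Pr : ProbabilityMeasure W) (A B : Set W),
      MeasurableSet A → MeasurableSet B → A ⊆ B → 0 < Pr A →
      sSup {x : EReal | ∃ ν ∈ U W {Pr} B, x = (((ν A * Pr B / Pr A : ℝ≥0) : ℝ) : EReal)}
        = 1)
    {p : ℝ≥0∞} (hp0 : p ≠ 0) (hp1 : p ≤ 1)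
    (Pr4 : ProbabilityMeasure (Fin 4)) (hPr4 : (Pr4 : Measure (Fin 4)) = m4 p)
    (μ4 : ProbabilityMeasure (Fin 4))
    (hμ4 : μ4 ∈ U (Fin 4) {Pr4} (q43 ⁻¹' {0, 1}))
    (g : Fin 4 → Fin 3) (hgsurj : Function.Surjective g)
    (hg01 : g ⁻¹' ({0, 1} : Set (Fin 3)) = q43 ⁻¹' {0, 1})
    (hgm0 : m4 p (g ⁻¹' ({0} : Set (Fin 3))) = p / 2)
    (hgm01 : m4 p (g ⁻¹' ({0, 1} : Set (Fin 3))) = p) :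
    (μ4 : Measure (Fin 4)) (g ⁻¹' ({0} : Set (Fin 3))) ≤ 1 / 2 := by
  have hg : Measurable g := measurable_of_countable g
  have hpt : p ≠ ∞ := (lt_of_le_of_lt hp1 (by norm_num)).ne
  have e := h2 (Fin 4) (Fin 3) g hg hgsurj {Pr4} {0, 1} .of_discrete
  rw [Set.image_singleton, hg01] at e
  have hmem : pushPM hg μ4 ∈ U (Fin 3) {pushPM hg Pr4} {0, 1} := by
    rw [e]; exact ⟨μ4, hμ4, rfl⟩
  -- measure-level values of the pushed prior
  have hP0 : ((pushPM hg Pr4 : ProbabilityMeasure (Fin 3)) : Measure (Fin 3)) {0} = p / 2 := by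
    rw [pushPM_apply' hg Pr4 .of_discrete, hPr4, hgm0]
  have hP01 : ((pushPM hg Pr4 : ProbabilityMeasure (Fin 3)) : Measure (Fin 3)) {0, 1} = p := by
    rw [pushPM_apply' hg Pr4 .of_discrete, hPr4, hgm01]
  -- positivity of the ℝ≥0-valued prior on {0}
  have hpos : 0 < (pushPM hg Pr4) ({0} : Set (Fin 3)) := by
    have := ProbabilityMeasure.ennreal_coeFn_eq_coeFn_toMeasure (pushPM hg Pr4)
      ({0} : Set (Fin 3))
    rw [hP0] at this
    have hne : ((pushPM hg Pr4) ({0} : Set (Fin 3)) : ℝ≥0∞) ≠ 0 := by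
      rw [this]
      simp [ENNReal.div_eq_zero_iff, hp0]
    exact pos_iff_ne_zero.mpr (by exact_mod_cast hne)
  have hle := upd_le U hsup (pushPM hg Pr4) (A := ({0} : Set (Fin 3)))
    (B := ({0, 1} : Set (Fin 3))) .of_discrete .of_discrete
    (by intro x hx; exact Or.inl hx) hpos hmem
  -- lift the ℝ≥0 inequality to ℝ≥0∞
  have hle' : ((pushPM hg μ4 : ProbabilityMeasure (Fin 3)) : Measure (Fin 3)) {0} * p
      ≤ p / 2 := by
    have := ENNReal.coe_le_coe.mpr hle
    rw [ENNReal.coe_mul, ProbabilityMeasure.ennreal_coeFn_eq_coeFn_toMeasure,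
      ProbabilityMeasure.ennreal_coeFn_eq_coeFn_toMeasure,
      ProbabilityMeasure.ennreal_coeFn_eq_coeFn_toMeasure, hP0, hP01] at this
    exact this
  rw [pushPM_apply' hg μ4 .of_discrete] at hle'
  have hhalf : p / 2 = (1 / 2) * p := by
    rw [ENNReal.div_eq_inv_mul, ENNReal.div_eq_inv_mul, mul_one]
  rw [hhalf] at hle'
  exact (ENNReal.mul_le_mul_iff_left hp0 hpt).mp hle'

lemma final_contra {m0 m1 m2 : ℝ≥0∞} (hsum : m0 + m1 + m2 = 1) (hle : m1 ≤ m2)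
    (hb : m0 + m2 ≤ 1 / 2) : m0 = 0 := by
  have h1 : (1 : ℝ≥0∞) + m0 ≤ 1 + 0 := by
    rw [add_zero]
    calc (1 : ℝ≥0∞) + m0 = m0 + m1 + m2 + m0 := by rw [hsum]
      _ = (m0 + m2) + (m0 + m1) := by ring
      _ ≤ (m0 + m2) + (m0 + m2) := add_le_add le_rfl (add_le_add le_rfl hle)
      _ ≤ 1 / 2 + 1 / 2 := add_le_add hb hb
      _ = 1 := ENNReal.add_halves 1
  exact le_zero_iff.mp ((ENNReal.add_le_add_iff_left ENNReal.one_ne_top).mp h1)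

/-- Zero preservation: if `Pr(A) = 0` for `A ⊆ B`, then any update of `Pr` on `B`
assigns probability `0` to `A`. -/
lemma upd_zero (U : UpdFamily) (h1 : P1 U) (h2 : P2 U) (h4 : P4 U)
    (hsup : ∀ (W : Type) [MeasurableSpace W] (Pr : ProbabilityMeasure W) (A B : Set W),
      MeasurableSet A → MeasurableSet B → A ⊆ B → 0 < Pr A →
      sSup {x : EReal | ∃ ν ∈ U W {Pr} B, x = (((ν A * Pr B / Pr A : ℝ≥0) : ℝ) : EReal)}
        = 1)
    {W : Type} [MeasurableSpace W] (Pr : ProbabilityMeasure W) {A B : Set W}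
    (hA : MeasurableSet A) (hB : MeasurableSet B) (hAB : A ⊆ B)
    (hBpos : 0 < Pr B) (hA0 : Pr A = 0)
    {ν : ProbabilityMeasure W} (hν : ν ∈ U W {Pr} B) : ν A = 0 := by
  by_contra ha0
  have cPr : ∀ s : Set W, ((Pr s : ℝ≥0) : ℝ≥0∞) = (Pr : Measure W) s := fun s =>
    ProbabilityMeasure.ennreal_coeFn_eq_coeFn_toMeasure Pr s
  have cν : ∀ s : Set W, ((ν s : ℝ≥0) : ℝ≥0∞) = (ν : Measure W) s := fun s =>
    ProbabilityMeasure.ennreal_coeFn_eq_coeFn_toMeasure ν s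
  have hPA : (Pr : Measure W) A = 0 := by rw [← cPr, hA0]; simp
  have hNA : (ν : Measure W) A ≠ 0 := by
    have : ((ν A : ℝ≥0) : ℝ≥0∞) ≠ 0 := by exact_mod_cast ha0
    rwa [cν] at this
  set p := (Pr : Measure W) B with hpdef
  have hp0 : p ≠ 0 := by
    rw [hpdef, ← cPr]
    exact_mod_cast hBpos.ne'
  have hp1 : p ≤ 1 := prob_le_one
  have hνB1 : (ν : Measure W) B = 1 := by
    have h := h1 W {Pr} B hB ν hν
    rw [← cν, h]; simp
  by_cases hBu : Bᶜ = ∅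
  · have hBuniv : B = univ := by rwa [compl_empty_iff] at hBu
    have h4' := h4 W {Pr} B hB (by
      intro μ hμ
      rw [mem_singleton_iff] at hμ
      subst hμ
      rw [hBuniv]
      simp)
    rw [h4', mem_singleton_iff] at hν
    exact ha0 (hν ▸ hA0)
  · obtain ⟨wO, hwO⟩ := nonempty_iff_ne_empty.mpr hBu
    have hAne : A.Nonempty := nonempty_iff_ne_empty.2 (fun h => hNA (by rw [h]; simp))
    obtain ⟨wA, hwA⟩ := hAne
    have hCm : (Pr : Measure W) (B \ A) = p := by rw [measure_diff_null hPA]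
    have hCne : (B \ A).Nonempty :=
      nonempty_iff_ne_empty.2 (fun h => hp0 (by rw [← hCm, h]; simp))
    obtain ⟨wC, hwC⟩ := hCne
    classical
    set f : W → Fin 3 := fun w => if w ∈ A then 0 else if w ∈ B then 1 else 2 with hfdef
    have hfA : ∀ w ∈ A, f w = 0 := fun w hw => by simp [hfdef, hw]
    have hfC : ∀ w ∈ B \ A, f w = 1 := fun w hw => by simp [hfdef, hw.2, hw.1]
    have hfO : ∀ w ∈ Bᶜ, f w = 2 := fun w hw => by
      have hw' : w ∉ B := hw
      have hw'' : w ∉ A := fun h => hw' (hAB h)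
      simp [hfdef, hw', hw'']
    have hpre0 : f ⁻¹' ({0} : Set (Fin 3)) = A := by
      ext w
      simp only [mem_preimage, mem_singleton_iff]
      by_cases h : w ∈ A
      · simp [hfA w h, h]
      · by_cases hb' : w ∈ B
        · rw [hfC w ⟨hb', h⟩]; simp [h]
        · rw [hfO w hb']; simp [h]
    have hpre1 : f ⁻¹' ({1} : Set (Fin 3)) = B \ A := by
      ext w
      simp only [mem_preimage, mem_singleton_iff]
      by_cases h : w ∈ A
      · rw [hfA w h]; simp [h, hAB h]
      · by_cases hb' : w ∈ B
        · rw [hfC w ⟨hb', h⟩]; simp [h, hb']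
        · rw [hfO w hb']; simp [h, hb']
    have hpre2 : f ⁻¹' ({2} : Set (Fin 3)) = Bᶜ := by
      ext w
      simp only [mem_preimage, mem_singleton_iff, mem_compl_iff]
      by_cases h : w ∈ A
      · rw [hfA w h]; simp [hAB h]
      · by_cases hb' : w ∈ B
        · rw [hfC w ⟨hb', h⟩]; simp [hb']
        · rw [hfO w hb']; simp [hb']
    have hmf : Measurable f := by
      apply measurable_to_countable'
      intro x
      fin_cases x
      · exact hpre0 ▸ hA
      · exact hpre1 ▸ (hB.diff hA)
      · exact hpre2 ▸ hB.compl
    have hfsurj : Function.Surjective f := by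
      intro y
      fin_cases y
      · exact ⟨wA, hfA _ hwA⟩
      · exact ⟨wC, hfC _ hwC⟩
      · exact ⟨wO, hfO _ hwO⟩
    have hpre01 : f ⁻¹' ({0, 1} : Set (Fin 3)) = B := by
      rw [show ({0, 1} : Set (Fin 3)) = {0} ∪ {1} by rw [Set.singleton_union],
        Set.preimage_union, hpre0, hpre1, Set.union_diff_cancel hAB]
    have e1 := h2 W (Fin 3) f hmf hfsurj {Pr} {0, 1} .of_discrete
    rw [Set.image_singleton, hpre01] at e1
    have mem1 : pushPM hmf ν ∈ U (Fin 3) {pushPM hmf Pr} {0, 1} := by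
      rw [e1]; exact ⟨ν, hν, rfl⟩
    have hprob4 : IsProbabilityMeasure (m4 p) := m4_prob hp1
    let Pr4 : ProbabilityMeasure (Fin 4) := ⟨m4 p, hprob4⟩
    have hq : Measurable q43 := measurable_of_countable q43
    have hqsurj : Function.Surjective q43 := by decide
    have hq0 : q43 ⁻¹' ({0} : Set (Fin 3)) = {0} := by
      ext i; fin_cases i <;> simp [q43]
    have hq01 : q43 ⁻¹' ({0, 1} : Set (Fin 3)) = {0, 1, 2} := by
      ext i; fin_cases i <;> simp [q43]
    have hkey : pushPM hq Pr4 = pushPM hmf Pr := by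
      apply ProbabilityMeasure.toMeasure_injective
      apply Measure.ext
      intro s hs
      rw [pushPM_apply' hq Pr4 hs, pushPM_apply' hmf Pr hs]
      show m4 p (q43 ⁻¹' s) = (Pr : Measure W) (f ⁻¹' s)
      rw [m4_apply, meas_split (Pr : Measure W) hA hB hAB (hmf hs)]
      have i0 : (Pr : Measure W) (f ⁻¹' s ∩ A) = 0 :=
        measure_mono_null inter_subset_right hPA
      have i1 : (Pr : Measure W) (f ⁻¹' s ∩ (B \ A)) =
          if (1 : Fin 3) ∈ s then p else 0 := by
        split_ifs with h
        · rw [inter_eq_right.mpr (fun w hw => by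
            rw [mem_preimage, hfC w hw]; exact h), hCm]
        · rw [show f ⁻¹' s ∩ (B \ A) = ∅ from eq_empty_of_subset_empty
            (by rintro w ⟨hws, hw⟩; exact absurd (by rw [← hfC w hw]; exact hws) h)]
          simp
      have i2 : (Pr : Measure W) (f ⁻¹' s ∩ Bᶜ) =
          if (2 : Fin 3) ∈ s then 1 - p else 0 := by
        split_ifs with h
        · rw [inter_eq_right.mpr (fun w hw => by
            rw [mem_preimage, hfO w hw]; exact h)]
          rw [prob_compl_eq_one_sub hB]
        · rw [show f ⁻¹' s ∩ Bᶜ = ∅ from eq_empty_of_subset_empty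
            (by rintro w ⟨hws, hw⟩; exact absurd (by rw [← hfO w hw]; exact hws) h)]
          simp
      rw [i0, i1, i2]
      have m1 : (1 : Fin 4) ∈ q43 ⁻¹' s ↔ (1 : Fin 3) ∈ s := Iff.rfl
      have m2 : (2 : Fin 4) ∈ q43 ⁻¹' s ↔ (1 : Fin 3) ∈ s := Iff.rfl
      have m3 : (3 : Fin 4) ∈ q43 ⁻¹' s ↔ (2 : Fin 3) ∈ s := Iff.rfl
      rw [m1, m2, m3]
      split_ifs <;> simp [ENNReal.add_halves]
    have e2 := h2 (Fin 4) (Fin 3) q43 hq hqsurj {Pr4} {0, 1} .of_discrete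
    rw [Set.image_singleton, hkey] at e2
    rw [e2] at mem1
    obtain ⟨μ4, hμ4, hpush⟩ := mem1
    have hpushm : ∀ s : Set (Fin 3),
        (μ4 : Measure (Fin 4)) (q43 ⁻¹' s) = (ν : Measure W) (f ⁻¹' s) := by
      intro s
      have hc := congrArg (fun (μ : ProbabilityMeasure (Fin 3)) => (μ : Measure (Fin 3)) s) hpush
      simpa [pushPM_apply' hq μ4 (MeasurableSet.of_discrete (s := s)),
        pushPM_apply' hmf ν (MeasurableSet.of_discrete (s := s))] using hc
    have hM0 : (μ4 : Measure (Fin 4)) {0} = (ν : Measure W) A := by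
      rw [← hq0, hpushm, hpre0]
    have hMsum : (μ4 : Measure (Fin 4)) {0, 1, 2} = 1 := by
      rw [← hq01, hpushm, hpre01, hνB1]
    have hsplit : (μ4 : Measure (Fin 4)) {0} + (μ4 : Measure (Fin 4)) {1}
        + (μ4 : Measure (Fin 4)) {2} = 1 := by
      rw [← hMsum, show ({0, 1, 2} : Set (Fin 4)) = ({0} ∪ {1}) ∪ {2} by
        ext i; simp only [mem_insert_iff, mem_union, mem_singleton_iff]; tauto]
      rw [measure_union (by simp) .of_discrete, measure_union (by simp) .of_discrete]
    rcases le_total ((μ4 : Measure (Fin 4)) {1}) ((μ4 : Measure (Fin 4)) {2}) with hcase | hcase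
    · -- merge cell 0 with cell 2
      have hg0set : (![0, 1, 0, 2] : Fin 4 → Fin 3) ⁻¹' {0} = ({0, 2} : Set (Fin 4)) := by
        ext i; fin_cases i <;> simp
      have hb := core_bound U h2 hsup hp0 hp1 Pr4 rfl μ4 hμ4 ![0, 1, 0, 2]
        (by decide)
        (by ext i; fin_cases i <;> simp [q43])
        (by rw [hg0set, m4_apply]; simp)
        (by rw [show (![0, 1, 0, 2] : Fin 4 → Fin 3) ⁻¹' {0, 1} = ({0, 1, 2} : Set (Fin 4))
              by ext i; fin_cases i <;> simp
            , m4_apply]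
            simp [ENNReal.add_halves])
      rw [hg0set] at hb
      have hM02 : (μ4 : Measure (Fin 4)) ({0, 2} : Set (Fin 4))
          = (μ4 : Measure (Fin 4)) {0} + (μ4 : Measure (Fin 4)) {2} := by
        rw [show ({0, 2} : Set (Fin 4)) = {0} ∪ {2} by rw [Set.singleton_union]]
        exact measure_union (by simp) .of_discrete
      rw [hM02] at hb
      exact hNA (by rw [← hM0]; exact final_contra hsplit hcase hb)
    · -- merge cell 0 with cell 1
      have hg0set : (![0, 0, 1, 2] : Fin 4 → Fin 3) ⁻¹' {0} = ({0, 1} : Set (Fin 4)) := by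
        ext i; fin_cases i <;> simp
      have hb := core_bound U h2 hsup hp0 hp1 Pr4 rfl μ4 hμ4 ![0, 0, 1, 2]
        (by decide)
        (by ext i; fin_cases i <;> simp [q43])
        (by rw [hg0set, m4_apply]; simp)
        (by rw [show (![0, 0, 1, 2] : Fin 4 → Fin 3) ⁻¹' {0, 1} = ({0, 1, 2} : Set (Fin 4))
              by ext i; fin_cases i <;> simp
            , m4_apply]
            simp [ENNReal.add_halves])
      rw [hg0set] at hb
      have hM01 : (μ4 : Measure (Fin 4)) ({0, 1} : Set (Fin 4))
          = (μ4 : Measure (Fin 4)) {0} + (μ4 : Measure (Fin 4)) {1} := by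
        rw [show ({0, 1} : Set (Fin 4)) = {0} ∪ {1} by rw [Set.singleton_union]]
        exact measure_union (by simp) .of_discrete
      rw [hM01] at hb
      have hsplit' : (μ4 : Measure (Fin 4)) {0} + (μ4 : Measure (Fin 4)) {2}
          + (μ4 : Measure (Fin 4)) {1} = 1 := by rw [← hsplit]; ring
      exact hNA (by rw [← hM0]; exact final_contra hsplit' hcase hb)

end Aux

/-- under P1–P4, if the quantity `U(A,B)` always equals 1, then the update
function acts like conditioning on singletons. -/
theorem stmt11 (U : UpdFamily) (hbase : UpdBase U) (h1 : P1 U) (h2 : P2 U) (h3 : P3 U)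
    (h4 : P4 U)
    (hsup : ∀ (W : Type) [MeasurableSpace W] (Pr : ProbabilityMeasure W) (A B : Set W),
      MeasurableSet A → MeasurableSet B → A ⊆ B → 0 < Pr A →
      sSup {x : EReal | ∃ ν ∈ U W {Pr} B, x = (((ν A * Pr B / Pr A : ℝ≥0) : ℝ) : EReal)}
        = 1) :
    ∀ (W : Type) [MeasurableSpace W] (Pr : ProbabilityMeasure W) (B : Set W),
      MeasurableSet B → 0 < Pr B → U W {Pr} B ⊆ {condPM Pr B} := by
  intro W mW Pr B hB hBpos ν hν
  have cPr : ∀ s : Set W, ((Pr s : ℝ≥0) : ℝ≥0∞) = (Pr : Measure W) s := fun s =>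
    ProbabilityMeasure.ennreal_coeFn_eq_coeFn_toMeasure Pr s
  have cν : ∀ s : Set W, ((ν s : ℝ≥0) : ℝ≥0∞) = (ν : Measure W) s := fun s =>
    ProbabilityMeasure.ennreal_coeFn_eq_coeFn_toMeasure ν s
  have hPB : (Pr : Measure W) B ≠ 0 := by
    rw [← cPr]; exact_mod_cast hBpos.ne'
  have hPBt : (Pr : Measure W) B ≠ ∞ := measure_ne_top _ _
  have hνB1 : (ν : Measure W) B = 1 := by
    rw [← cν, h1 W {Pr} B hB ν hν]; simp
  have key : ∀ E : Set W, MeasurableSet E → E ⊆ B →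
      (ν : Measure W) E * (Pr : Measure W) B ≤ (Pr : Measure W) E := by
    intro E hE hEB
    rcases eq_zero_or_pos (Pr E) with h0 | hpos
    · have hz := upd_zero U h1 h2 h4 hsup Pr hE hB hEB hBpos h0 hν
      have hz' : (ν : Measure W) E = 0 := by rw [← cν, hz]; simp
      rw [hz', zero_mul]
      exact zero_le
    · have hle := upd_le U hsup Pr hE hB hEB hpos hν
      calc (ν : Measure W) E * (Pr : Measure W) B
          = ((ν E * Pr B : ℝ≥0) : ℝ≥0∞) := by rw [ENNReal.coe_mul, cν, cPr]
        _ ≤ ((Pr E : ℝ≥0) : ℝ≥0∞) := ENNReal.coe_le_coe.2 hle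
        _ = (Pr : Measure W) E := cPr E
  have keq : ∀ E : Set W, MeasurableSet E → E ⊆ B →
      (ν : Measure W) E * (Pr : Measure W) B = (Pr : Measure W) E := by
    intro E hE hEB
    have k1 := key E hE hEB
    have k2 := key (B \ E) (hB.diff hE) diff_subset
    apply add_eq_of_le_of_le k1 k2 ?_ (measure_ne_top _ _) (measure_ne_top _ _)
    have hNsum : (ν : Measure W) E + (ν : Measure W) (B \ E) = 1 := by
      rw [← measure_union disjoint_sdiff_right (hB.diff hE), union_diff_cancel hEB, hνB1]
    have hPsum : (Pr : Measure W) E + (Pr : Measure W) (B \ E) = (Pr : Measure W) B := by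
      rw [← measure_union disjoint_sdiff_right (hB.diff hE), union_diff_cancel hEB]
    calc (ν : Measure W) E * (Pr : Measure W) B
        + (ν : Measure W) (B \ E) * (Pr : Measure W) B
        = ((ν : Measure W) E + (ν : Measure W) (B \ E)) * (Pr : Measure W) B :=
          (add_mul _ _ _).symm
      _ = 1 * (Pr : Measure W) B := by rw [hNsum]
      _ = (Pr : Measure W) B := one_mul _
      _ = (Pr : Measure W) E + (Pr : Measure W) (B \ E) := hPsum.symm
  rw [mem_singleton_iff]
  simp only [condPM, hPB, ne_eq, not_false_eq_true, ↓reduceDIte]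
  apply ProbabilityMeasure.toMeasure_injective
  apply Measure.ext
  intro s hs
  show (ν : Measure W) s = ((Pr : Measure W)[|B]) s
  rw [ProbabilityTheory.cond_apply hB]
  have hNc : (ν : Measure W) Bᶜ = 0 := by
    have hc := prob_compl_eq_one_sub (μ := (ν : Measure W)) hB
    rw [hνB1] at hc
    simpa using hc
  have hs1 : (ν : Measure W) s = (ν : Measure W) (s ∩ B) := by
    have hd0 : (ν : Measure W) (s \ B) = 0 :=
      measure_mono_null (fun w hw => hw.2) hNc
    rw [← measure_inter_add_diff s hB, hd0, add_zero]
  have hx := keq (s ∩ B) (hs.inter hB) inter_subset_right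
  calc (ν : Measure W) s = (ν : Measure W) (s ∩ B) := hs1
    _ = (ν : Measure W) (s ∩ B) * ((Pr : Measure W) B * ((Pr : Measure W) B)⁻¹) := by
        rw [ENNReal.mul_inv_cancel hPB hPBt, mul_one]
    _ = ((ν : Measure W) (s ∩ B) * (Pr : Measure W) B) * ((Pr : Measure W) B)⁻¹ := by
        ring
    _ = (Pr : Measure W) (s ∩ B) * ((Pr : Measure W) B)⁻¹ := by rw [hx]
    _ = ((Pr : Measure W) B)⁻¹ * (Pr : Measure W) (B ∩ s) := by
        rw [inter_comm s B, mul_comm]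
end
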